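/- arXiv:math/0603387 — 2 statements merged into one kernel-verified Lean document; each statement's English description precedes it below -/
import Mathlib

section
/- Suppose z ∈ ℤ_3 with 1 ≤ v_3(z(z−1)) < ∞. Then there exists a unique q ∈ 1 + 3ℤ_3 with q ≠ 1 such that ι_q(z) = z. Moreover if z ≡ 0 (mod 3) then q ≡ 7 (mod 9), and if z ≡ 1 (mod 3) then q ≡ 4 (mod 9). -/
open Finset IsUltrametricDist

namespace ExistsUniqueQAux

noncomputable def Cq (x : ℚ_[3]) (k : ℕ) : ℚ_[3] :=
  (∏ i ∈ Finset.range k, (x - (i : ℚ_[3]))) / (k.factorial : ℚ_[3])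

lemma factorial_ne (k : ℕ) : ((k.factorial : ℚ_[3])) ≠ 0 := by
  exact_mod_cast k.factorial_ne_zero

lemma Cq_zero (x : ℚ_[3]) : Cq x 0 = 1 := by simp [Cq]

lemma Cq_one (x : ℚ_[3]) : Cq x 1 = x := by
  simp [Cq, Finset.prod_range_succ]

lemma Cq_two (x : ℚ_[3]) : Cq x 2 = x * (x - 1) / 2 := by
  simp [Cq, Finset.prod_range_succ]

lemma Cq_three (x : ℚ_[3]) : Cq x 3 = x * (x - 1) * (x - 2) / 6 := by
  simp [Cq, Finset.prod_range_succ]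
  norm_num [Nat.factorial]

lemma Cq_rec (x : ℚ_[3]) (j : ℕ) :
    Cq x (j + 2) * (((j + 1) * (j + 2) : ℕ) : ℚ_[3]) = x * (x - 1) * Cq (x - 2) j := by
  have h1 : (((j + 2).factorial : ℚ_[3])) = (j.factorial : ℚ_[3]) * (((j+1) * (j+2) : ℕ) : ℚ_[3]) := by
    push_cast [Nat.factorial_succ]
    ring
  have h2 : ∏ i ∈ Finset.range (j + 2), (x - (i : ℚ_[3]))
      = x * (x - 1) * ∏ i ∈ Finset.range j, ((x - 2) - (i : ℚ_[3])) := by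
    rw [Finset.prod_range_succ', Finset.prod_range_succ']
    have : ∀ i ∈ Finset.range j, (x - ((i + 1 + 1 : ℕ) : ℚ_[3])) = ((x - 2) - (i : ℚ_[3])) := by
      intro i _
      push_cast
      ring
    rw [Finset.prod_congr rfl this]
    push_cast
    ring
  have hne : (((j+1) * (j+2) : ℕ) : ℚ_[3]) ≠ 0 := by
    have : ((j+1) * (j+2) : ℕ) ≠ 0 := by positivity
    exact_mod_cast this
  rw [Cq, Cq, h2, h1, div_mul_eq_mul_div, mul_div_mul_right _ _ hne, mul_div_assoc]

lemma Cq_nat (n k : ℕ) : Cq (n : ℚ_[3]) k = (n.choose k : ℚ_[3]) := by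
  have key : ∏ i ∈ Finset.range k, ((n : ℚ_[3]) - (i : ℚ_[3])) = (n.descFactorial k : ℚ_[3]) := by
    induction k with
    | zero => simp
    | succ k ih =>
      rw [Finset.prod_range_succ]
      by_cases h : n ≤ k
      · have h0 : ((n.descFactorial (k+1) : ℚ_[3])) = 0 := by
          have h' : n.descFactorial (k+1) = 0 := Nat.descFactorial_eq_zero_iff_lt.mpr (by omega)
          exact_mod_cast congrArg (Nat.cast : ℕ → ℚ_[3]) h'
        rw [h0]
        rcases Nat.lt_or_ge n k with h' | h'
        · have : (n.descFactorial k : ℚ_[3]) = 0 := by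
            have : n.descFactorial k = 0 := by rw [Nat.descFactorial_eq_zero_iff_lt]; omega
            simp [this]
          rw [ih, this, zero_mul]
        · have hnk : n = k := by omega
          subst hnk
          simp
      · push_neg at h
        rw [ih, Nat.descFactorial_succ]
        have : ((n - k : ℕ) : ℚ_[3]) = (n : ℚ_[3]) - (k : ℚ_[3]) := by
          push_cast [Nat.cast_sub (le_of_lt h)]
          ring
        push_cast [Nat.cast_sub (le_of_lt h)]
        ring
  rw [Cq, key, Nat.descFactorial_eq_factorial_mul_choose]
  push_cast
  rw [mul_comm]
  exact mul_div_cancel_right₀ _ (factorial_ne k)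

lemma isometry_coe : Isometry (fun t : ℤ_[3] => (t : ℚ_[3])) := by
  have : ∀ x : ℤ_[3], ‖(PadicInt.Coe.ringHom x : ℚ_[3])‖ = ‖x‖ := fun x => (PadicInt.norm_def).symm
  exact AddMonoidHomClass.isometry_of_norm PadicInt.Coe.ringHom this

lemma continuous_coe : Continuous (fun t : ℤ_[3] => (t : ℚ_[3])) := isometry_coe.continuous

lemma continuous_Cq (k : ℕ) : Continuous (fun t : ℤ_[3] => Cq (t : ℚ_[3]) k) := by
  unfold Cq
  apply Continuous.div_const
  apply continuous_finset_prod
  intro i _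
  exact continuous_coe.sub continuous_const

lemma norm_Cq_le (y : ℤ_[3]) (k : ℕ) : ‖Cq (y : ℚ_[3]) k‖ ≤ 1 := by
  have hclosed : IsClosed {w : ℚ_[3] | ‖w‖ ≤ 1} :=
    isClosed_le (continuous_norm) continuous_const
  have hpre : IsClosed ((fun t : ℤ_[3] => Cq (t : ℚ_[3]) k) ⁻¹' {w : ℚ_[3] | ‖w‖ ≤ 1}) :=
    hclosed.preimage (continuous_Cq k)
  have hsub : Set.range (Nat.cast : ℕ → ℤ_[3]) ⊆
      ((fun t : ℤ_[3] => Cq (t : ℚ_[3]) k) ⁻¹' {w : ℚ_[3] | ‖w‖ ≤ 1}) := by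
    rintro _ ⟨n, rfl⟩
    have : ((n : ℤ_[3]) : ℚ_[3]) = (n : ℚ_[3]) := by push_cast; ring
    simp only [Set.mem_preimage, Set.mem_setOf_eq, this, Cq_nat]
    have : ((n.choose k : ℚ_[3])) = (((n.choose k : ℤ) : ℚ_[3])) := by push_cast; ring
    rw [this]
    exact Padic.norm_int_le_one _
  have : Set.univ ⊆ ((fun t : ℤ_[3] => Cq (t : ℚ_[3]) k) ⁻¹' {w : ℚ_[3] | ‖w‖ ≤ 1}) := by
    rw [← PadicInt.denseRange_natCast.closure_range]
    exact hpre.closure_subset_iff.mpr hsub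
  exact this (Set.mem_univ y)

end ExistsUniqueQAux
section PartB
open Finset IsUltrametricDist
namespace ExistsUniqueQAux

noncomputable def Fq (x s : ℚ_[3]) : ℚ_[3] := ∑' k : ℕ, Cq x (k + 1) * s ^ k
noncomputable def Gq (x s : ℚ_[3]) : ℚ_[3] := ∑' k : ℕ, Cq x (k + 2) * s ^ k
noncomputable def Tq (x s : ℚ_[3]) : ℚ_[3] := ∑' k : ℕ, Cq x (k + 4) * s ^ (k + 2)
noncomputable def Phi (x s : ℚ_[3]) : ℚ_[3] :=
  -(x - 2)⁻¹ * (3 + (6 / (x * (x - 1))) * Tq x s)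

lemma norm_term_le (y : ℤ_[3]) {s : ℚ_[3]} (hs : ‖s‖ ≤ 1/3) (a b k : ℕ) :
    ‖Cq (y : ℚ_[3]) (k + a) * s ^ (k + b)‖ ≤ (1/3) ^ k := by
  rw [norm_mul, norm_pow]
  calc ‖Cq (y : ℚ_[3]) (k + a)‖ * ‖s‖ ^ (k + b)
      ≤ 1 * (1/3) ^ (k + b) := by
        apply mul_le_mul (norm_Cq_le y _) (pow_le_pow_left₀ (norm_nonneg s) hs _)
          (by positivity) zero_le_one
    _ ≤ (1/3) ^ k := by
        rw [one_mul]
        exact pow_le_pow_of_le_one (by norm_num) (by norm_num) (by omega)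

lemma summable_ser (y : ℤ_[3]) {s : ℚ_[3]} (hs : ‖s‖ ≤ 1/3) (a b : ℕ) :
    Summable (fun k : ℕ => Cq (y : ℚ_[3]) (k + a) * s ^ (k + b)) :=
  Summable.of_norm_bounded (summable_geometric_of_lt_one (by norm_num) (by norm_num))
    (norm_term_le y hs a b)

lemma sum_choose_geom (s : ℚ_[3]) (n : ℕ) :
    ∑ i ∈ Finset.range n, (1 + s) ^ i
      = ∑ k ∈ Finset.range n, (n.choose (k + 1) : ℚ_[3]) * s ^ k := by
  induction n with
  | zero => simp
  | succ n ih =>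
    rw [Finset.sum_range_succ, ih]
    have hbin : (1 + s) ^ n = ∑ k ∈ Finset.range (n + 1), (n.choose k : ℚ_[3]) * s ^ k := by
      rw [add_comm 1 s, add_pow]
      apply Finset.sum_congr rfl
      intro k _
      rw [one_pow]
      ring
    rw [hbin]
    have lhs1 : ∑ k ∈ Finset.range n, (n.choose (k + 1) : ℚ_[3]) * s ^ k
        = ∑ k ∈ Finset.range (n + 1), (n.choose (k + 1) : ℚ_[3]) * s ^ k := by
      rw [Finset.sum_range_succ, Nat.choose_succ_self]
      simp
    rw [lhs1, ← Finset.sum_add_distrib]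
    apply Finset.sum_congr rfl
    intro k _
    have : ((n + 1).choose (k + 1) : ℚ_[3]) = (n.choose (k + 1) : ℚ_[3]) + (n.choose k : ℚ_[3]) := by
      rw [Nat.choose_succ_succ]
      push_cast
      ring
    rw [this]
    ring

lemma Fq_nat (n : ℕ) (s : ℚ_[3]) :
    Fq (n : ℚ_[3]) s = ∑ i ∈ Finset.range n, (1 + s) ^ i := by
  rw [Fq, tsum_eq_sum (s := Finset.range n), sum_choose_geom]
  · apply Finset.sum_congr rfl
    intro k _
    rw [Cq_nat]
  · intro k hk
    simp only [Finset.mem_range, not_lt] at hk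
    rw [Cq_nat, Nat.choose_eq_zero_of_lt (by omega)]
    simp

lemma Fq_split (y : ℤ_[3]) {s : ℚ_[3]} (hs : ‖s‖ ≤ 1/3) :
    Fq (y : ℚ_[3]) s = (y : ℚ_[3]) + s * Gq (y : ℚ_[3]) s := by
  have hsum : Summable (fun k : ℕ => Cq (y : ℚ_[3]) (k + 1) * s ^ k) := by
    simpa using summable_ser y hs 1 0
  rw [Fq, Summable.tsum_eq_zero_add hsum]
  simp only [zero_add, pow_zero, mul_one, Cq_one]
  congr 1
  have : ∀ k : ℕ, Cq (y : ℚ_[3]) (k + 1 + 1) * s ^ (k + 1)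
      = s * (Cq (y : ℚ_[3]) (k + 2) * s ^ k) := by
    intro k
    rw [pow_succ]
    ring
  rw [tsum_congr this, tsum_mul_left, Gq]

lemma Gq_split (y : ℤ_[3]) {s : ℚ_[3]} (hs : ‖s‖ ≤ 1/3) :
    Gq (y : ℚ_[3]) s = Cq (y : ℚ_[3]) 2 + Cq (y : ℚ_[3]) 3 * s + Tq (y : ℚ_[3]) s := by
  have hsum : Summable (fun k : ℕ => Cq (y : ℚ_[3]) (k + 2) * s ^ k) := by
    simpa using summable_ser y hs 2 0
  have hsum2 : Summable (fun k : ℕ => Cq (y : ℚ_[3]) (k + 3) * s ^ (k + 1)) := by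
    simpa [add_comm, add_assoc, add_left_comm] using summable_ser y hs 3 1
  rw [Gq, Summable.tsum_eq_zero_add hsum]
  simp only [zero_add, pow_zero, mul_one]
  have e1 : ∀ k : ℕ, Cq (y : ℚ_[3]) (k + 1 + 2) * s ^ (k + 1)
      = Cq (y : ℚ_[3]) (k + 3) * s ^ (k + 1) := by intro k; norm_num
  rw [tsum_congr e1, Summable.tsum_eq_zero_add hsum2]
  rw [Tq]
  have e2 : ∀ k : ℕ, Cq (y : ℚ_[3]) (k + 1 + 3) * s ^ (k + 1 + 1)
      = Cq (y : ℚ_[3]) (k + 4) * s ^ (k + 2) := by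
    intro k
    norm_num [show k + 1 + 3 = k + 4 by omega, show k + 1 + 1 = k + 2 by omega]
  rw [tsum_congr e2]
  ring

end ExistsUniqueQAux
end PartB
section PartC
open Finset IsUltrametricDist
namespace ExistsUniqueQAux

lemma le_mul_pow_of_mul_le {a B c : ℝ} (n : ℕ) (ha : 0 ≤ a)
    (h1 : a * c ≤ B) (h2 : (3:ℝ) ^ (-(n:ℤ)) ≤ c) : a ≤ B * 3 ^ n := by
  have key : (3:ℝ) ^ (-(n:ℤ)) * 3 ^ n = 1 := by
    rw [← zpow_natCast (3:ℝ) n, ← zpow_add₀ (by norm_num : (3:ℝ) ≠ 0)]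
    norm_num
  have h3 : a * (3:ℝ) ^ (-(n:ℤ)) ≤ B := le_trans (mul_le_mul_of_nonneg_left h2 ha) h1
  have h4 : a * (3:ℝ) ^ (-(n:ℤ)) * 3 ^ n ≤ B * 3 ^ n :=
    mul_le_mul_of_nonneg_right h3 (by positivity)
  calc a = a * ((3:ℝ) ^ (-(n:ℤ)) * 3 ^ n) := by rw [key, mul_one]
    _ = a * (3:ℝ) ^ (-(n:ℤ)) * 3 ^ n := by ring
    _ ≤ B * 3 ^ n := h4

lemma padicValNat_le_aux (m l : ℕ) (h : 3 ^ m ≤ l + 4) : m ≤ l + 1 := by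
  by_contra hc
  push_neg at hc
  have h1 : l < 3 ^ l := Nat.lt_pow_self (n := l) (by norm_num)
  have h2 : 3 ^ (l + 2) ≤ 3 ^ m := Nat.pow_le_pow_right (by norm_num) (by omega)
  have h3 : 3 ^ (l + 2) = 9 * 3 ^ l := by ring
  omega

lemma norm_nat_eq (m : ℕ) (hm : m ≠ 0) :
    ‖((m : ℕ) : ℚ_[3])‖ = (3:ℝ) ^ (-(padicValNat 3 m : ℤ)) := by
  have hne : ((m : ℕ) : ℚ_[3]) ≠ 0 := Nat.cast_ne_zero.mpr hm
  rw [Padic.norm_eq_zpow_neg_valuation hne, Padic.valuation_natCast]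
  norm_num

lemma norm_consec (k : ℕ) :
    (3:ℝ) ^ (-((k+1 : ℕ) : ℤ)) ≤ ‖((((k+3) * (k+4)) : ℕ) : ℚ_[3])‖ := by
  have h34 : ¬(3 ∣ (k+3) ∧ 3 ∣ (k+4)) := by omega
  have b3 : 3 ^ padicValNat 3 (k+3) ≤ k + 3 := Nat.le_of_dvd (by omega) pow_padicValNat_dvd
  have b4 : 3 ^ padicValNat 3 (k+4) ≤ k + 4 := Nat.le_of_dvd (by omega) pow_padicValNat_dvd
  have hv : padicValNat 3 (k+3) + padicValNat 3 (k+4) ≤ k + 1 := by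
    rcases not_and_or.mp h34 with h | h
    · rw [padicValNat.eq_zero_of_not_dvd h, zero_add]
      exact padicValNat_le_aux _ _ b4
    · rw [padicValNat.eq_zero_of_not_dvd h, add_zero]
      exact padicValNat_le_aux _ _ (by omega)
  have hcast : ((((k+3) * (k+4)) : ℕ) : ℚ_[3]) = ((k+3 : ℕ) : ℚ_[3]) * ((k+4 : ℕ) : ℚ_[3]) := by
    push_cast; ring
  rw [hcast, norm_mul, norm_nat_eq (k+3) (by omega), norm_nat_eq (k+4) (by omega),
    ← zpow_add₀ (by norm_num : (3:ℝ) ≠ 0)]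
  apply zpow_le_zpow_right₀ (by norm_num : (1:ℝ) ≤ 3)
  have hz : ((padicValNat 3 (k+3) : ℤ)) + ((padicValNat 3 (k+4) : ℤ)) ≤ ((k+1 : ℕ) : ℤ) := by
    exact_mod_cast hv
  omega

lemma norm_Cq4_le (y : ℤ_[3]) (k : ℕ) :
    ‖Cq (y : ℚ_[3]) (k + 4)‖ ≤ ‖(y : ℚ_[3]) * ((y : ℚ_[3]) - 1)‖ * 3 ^ (k + 1) := by
  have hrec := Cq_rec (y : ℚ_[3]) (k + 2)
  have hidx1 : k + 2 + 2 = k + 4 := by omega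
  have hidx2 : (k + 2 + 1) * (k + 2 + 2) = (k+3) * (k+4) := by ring
  rw [hidx1, hidx2] at hrec
  have hyc : ((y : ℚ_[3]) - 2) = ((y - 2 : ℤ_[3]) : ℚ_[3]) := by norm_cast
  have hn : ‖Cq (y : ℚ_[3]) (k + 4)‖ * ‖((((k+3) * (k+4)) : ℕ) : ℚ_[3])‖
      ≤ ‖(y : ℚ_[3]) * ((y : ℚ_[3]) - 1)‖ := by
    rw [← norm_mul, hrec, norm_mul]
    have : ‖Cq ((y : ℚ_[3]) - 2) (k + 2)‖ ≤ 1 := by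
      rw [hyc]; exact norm_Cq_le (y - 2) (k + 2)
    calc ‖(y : ℚ_[3]) * ((y : ℚ_[3]) - 1)‖ * ‖Cq ((y : ℚ_[3]) - 2) (k + 2)‖
        ≤ ‖(y : ℚ_[3]) * ((y : ℚ_[3]) - 1)‖ * 1 :=
          mul_le_mul_of_nonneg_left this (norm_nonneg _)
      _ = _ := mul_one _
  exact le_mul_pow_of_mul_le (k+1) (norm_nonneg _) hn (norm_consec k)

lemma pow_cancel_aux (k : ℕ) : (3:ℝ) ^ (k+1) * (1/3) ^ (k+1) = 1 := by
  rw [one_div, inv_pow]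
  field_simp

lemma norm_Tq_le (y : ℤ_[3]) {s : ℚ_[3]} (hs : ‖s‖ ≤ 1/3) :
    ‖Tq (y : ℚ_[3]) s‖ ≤ ‖(y : ℚ_[3]) * ((y : ℚ_[3]) - 1)‖ * (1/3) := by
  apply norm_tsum_le_of_forall_le_of_nonneg (by positivity)
  intro k
  rw [norm_mul, norm_pow]
  calc ‖Cq (y : ℚ_[3]) (k + 4)‖ * ‖s‖ ^ (k + 2)
      ≤ (‖(y : ℚ_[3]) * ((y : ℚ_[3]) - 1)‖ * 3 ^ (k + 1)) * (1/3) ^ (k + 2) := by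
        apply mul_le_mul (norm_Cq4_le y k) (pow_le_pow_left₀ (norm_nonneg _) hs _)
          (by positivity) (by positivity)
    _ = ‖(y : ℚ_[3]) * ((y : ℚ_[3]) - 1)‖ * (1/3) := by
        rw [mul_assoc]
        congr 1
        rw [pow_succ (1/3 : ℝ) (k+1), ← mul_assoc, pow_cancel_aux, one_mul]

lemma norm_pow_sub_pow {s s' : ℚ_[3]} (hs : ‖s‖ ≤ 1/3) (hs' : ‖s'‖ ≤ 1/3) (n : ℕ) :
    ‖s ^ (n+1) - s' ^ (n+1)‖ ≤ (1/3) ^ n * ‖s - s'‖ := by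
  rw [← geom_sum₂_mul s s' (n+1), norm_mul]
  apply mul_le_mul_of_nonneg_right _ (norm_nonneg _)
  apply norm_sum_le_of_forall_le_of_nonneg (by positivity)
  intro i hi
  simp only [Finset.mem_range] at hi
  rw [norm_mul, norm_pow, norm_pow]
  have hsub : n + 1 - 1 - i = n - i := by omega
  rw [hsub]
  calc ‖s‖ ^ i * ‖s'‖ ^ (n - i)
      ≤ (1/3) ^ i * (1/3) ^ (n - i) := by
        apply mul_le_mul (pow_le_pow_left₀ (norm_nonneg _) hs _)
          (pow_le_pow_left₀ (norm_nonneg _) hs' _) (by positivity) (by positivity)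
    _ = (1/3) ^ n := by rw [← pow_add]; congr 1; omega

lemma norm_Tq_sub_le (y : ℤ_[3]) {s s' : ℚ_[3]} (hs : ‖s‖ ≤ 1/3) (hs' : ‖s'‖ ≤ 1/3) :
    ‖Tq (y : ℚ_[3]) s - Tq (y : ℚ_[3]) s'‖
      ≤ ‖(y : ℚ_[3]) * ((y : ℚ_[3]) - 1)‖ * ‖s - s'‖ := by
  have hsub : Tq (y : ℚ_[3]) s - Tq (y : ℚ_[3]) s'
      = ∑' k : ℕ, Cq (y : ℚ_[3]) (k + 4) * (s ^ (k+2) - s' ^ (k+2)) := by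
    rw [Tq, Tq, ← Summable.tsum_sub (summable_ser y hs 4 2) (summable_ser y hs' 4 2)]
    exact tsum_congr (fun k => by ring)
  rw [hsub]
  apply norm_tsum_le_of_forall_le_of_nonneg (by positivity)
  intro k
  rw [norm_mul]
  calc ‖Cq (y : ℚ_[3]) (k + 4)‖ * ‖s ^ (k+2) - s' ^ (k+2)‖
      ≤ (‖(y : ℚ_[3]) * ((y : ℚ_[3]) - 1)‖ * 3 ^ (k + 1)) * ((1/3) ^ (k+1) * ‖s - s'‖) := by
        apply mul_le_mul (norm_Cq4_le y k) (norm_pow_sub_pow hs hs' (k+1))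
          (norm_nonneg _) (by positivity)
    _ = ‖(y : ℚ_[3]) * ((y : ℚ_[3]) - 1)‖ * ‖s - s'‖ := by
        have h := pow_cancel_aux k
        calc ‖(y : ℚ_[3]) * ((y : ℚ_[3]) - 1)‖ * 3 ^ (k + 1) * ((1/3) ^ (k+1) * ‖s - s'‖)
            = ‖(y : ℚ_[3]) * ((y : ℚ_[3]) - 1)‖ * ‖s - s'‖ * ((3:ℝ) ^ (k+1) * (1/3) ^ (k+1)) := by
              ring
          _ = _ := by rw [h, mul_one]

end ExistsUniqueQAux
end PartC
section PartD
open Finset IsUltrametricDist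
namespace ExistsUniqueQAux

lemma norm_two : ‖(2 : ℚ_[3])‖ = 1 := by
  have hle : ‖(2 : ℚ_[3])‖ ≤ 1 := by
    have := Padic.norm_int_le_one (p := 3) (2 : ℤ)
    simpa using this
  have hlt : ¬ ‖(2 : ℚ_[3])‖ < 1 := by
    intro h
    have := (Padic.norm_intCast_lt_one_iff (p := 3) (k := 2)).mp (by simpa using h)
    norm_num at this
  linarith [lt_or_eq_of_le hle |>.resolve_left hlt ▸ le_refl (1:ℝ)]

lemma norm_three : ‖(3 : ℚ_[3])‖ = 1/3 := by
  have := Padic.norm_p (p := 3)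
  rw [show (((3:ℕ)) : ℚ_[3]) = (3 : ℚ_[3]) by norm_num] at this
  rw [this]
  norm_num

lemma norm_six : ‖(6 : ℚ_[3])‖ = 1/3 := by
  have : (6 : ℚ_[3]) = 2 * 3 := by norm_num
  rw [this, norm_mul, norm_two, norm_three, one_mul]

section Fixed

variable (y : ℤ_[3])

lemma norm_h_le {s : ℚ_[3]} (hs : ‖s‖ ≤ 1/3)
    (hA : (y : ℚ_[3]) * ((y : ℚ_[3]) - 1) ≠ 0) :
    ‖(6 / ((y : ℚ_[3]) * ((y : ℚ_[3]) - 1))) * Tq (y : ℚ_[3]) s‖ ≤ 1/9 := by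
  set A := (y : ℚ_[3]) * ((y : ℚ_[3]) - 1) with hAdef
  have hApos : 0 < ‖A‖ := norm_pos_iff.mpr hA
  rw [norm_mul, norm_div, norm_six]
  calc (1/3) / ‖A‖ * ‖Tq (y : ℚ_[3]) s‖
      ≤ (1/3) / ‖A‖ * (‖A‖ * (1/3)) := by
        apply mul_le_mul_of_nonneg_left (norm_Tq_le y hs) (by positivity)
    _ = 1/9 := by field_simp; ring
  
lemma norm_Phi_le {s : ℚ_[3]} (hs : ‖s‖ ≤ 1/3)
    (hA : (y : ℚ_[3]) * ((y : ℚ_[3]) - 1) ≠ 0)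
    (hu : ‖(y : ℚ_[3]) - 2‖ = 1) :
    ‖Phi (y : ℚ_[3]) s‖ ≤ 1/3 := by
  rw [Phi, norm_mul, norm_neg, norm_inv, hu, inv_one, one_mul]
  refine le_trans (norm_add_le_max _ _) ?_
  apply max_le
  · rw [norm_three]
  · linarith [norm_h_le y hs hA]

lemma norm_Phi_sub_le {s s' : ℚ_[3]} (hs : ‖s‖ ≤ 1/3) (hs' : ‖s'‖ ≤ 1/3)
    (hA : (y : ℚ_[3]) * ((y : ℚ_[3]) - 1) ≠ 0)
    (hu : ‖(y : ℚ_[3]) - 2‖ = 1) :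
    ‖Phi (y : ℚ_[3]) s - Phi (y : ℚ_[3]) s'‖ ≤ (1/3) * ‖s - s'‖ := by
  set A := (y : ℚ_[3]) * ((y : ℚ_[3]) - 1) with hAdef
  have hApos : 0 < ‖A‖ := norm_pos_iff.mpr hA
  have hdiff : Phi (y : ℚ_[3]) s - Phi (y : ℚ_[3]) s'
      = -((y : ℚ_[3]) - 2)⁻¹ * ((6 / A) * (Tq (y : ℚ_[3]) s - Tq (y : ℚ_[3]) s')) := by
    rw [Phi, Phi]
    ring
  rw [hdiff, norm_mul, norm_neg, norm_inv, hu, inv_one, one_mul, norm_mul, norm_div, norm_six]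
  calc (1/3) / ‖A‖ * ‖Tq (y : ℚ_[3]) s - Tq (y : ℚ_[3]) s'‖
      ≤ (1/3) / ‖A‖ * (‖A‖ * ‖s - s'‖) := by
        apply mul_le_mul_of_nonneg_left (norm_Tq_sub_le y hs hs') (by positivity)
    _ = (1/3) * ‖s - s'‖ := by field_simp

lemma Phi_iff_Gq {s : ℚ_[3]} (hs : ‖s‖ ≤ 1/3)
    (hA : (y : ℚ_[3]) * ((y : ℚ_[3]) - 1) ≠ 0)
    (hu : ‖(y : ℚ_[3]) - 2‖ = 1) :
    Phi (y : ℚ_[3]) s = s ↔ Gq (y : ℚ_[3]) s = 0 := by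
  have hune : ((y : ℚ_[3]) - 2) ≠ 0 := by
    intro h
    rw [h] at hu
    simp at hu
  have hsplit := Gq_split y hs
  rw [Cq_two, Cq_three] at hsplit
  obtain ⟨t, ht⟩ : ∃ t, Tq ((y : ℤ_[3]) : ℚ_[3]) s = t := ⟨_, rfl⟩
  rw [ht] at hsplit
  have hPhi : Phi (y : ℚ_[3]) s
      = -((y:ℚ_[3]) - 2)⁻¹ * (3 + (6 / ((y:ℚ_[3]) * ((y:ℚ_[3]) - 1))) * t) := by
    rw [Phi, ht]
  constructor
  · intro h
    rw [hsplit, ← h, hPhi]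
    field_simp [(mul_ne_zero_iff.mp hA).1, (mul_ne_zero_iff.mp hA).2]
    ring
  · intro h
    rw [hsplit] at h
    rw [hPhi]
    have hT : t
        = -((y:ℚ_[3]) * ((y:ℚ_[3]) - 1) / 2) - ((y:ℚ_[3]) * ((y:ℚ_[3]) - 1) * ((y:ℚ_[3]) - 2) / 6) * s := by
      linear_combination h
    rw [hT]
    field_simp [(mul_ne_zero_iff.mp hA).1, (mul_ne_zero_iff.mp hA).2]
    ring

end Fixed

lemma iota_spec (ι : ℤ_[3] → ℤ_[3] → ℤ_[3])
    (hι : ∀ q : ℤ_[3], (3 : ℤ_[3]) ∣ q - 1 →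
      Continuous (ι q) ∧ ∀ n : ℕ, ι q n = ∑ i ∈ Finset.range n, q ^ i)
    (q : ℤ_[3]) (hq : (3 : ℤ_[3]) ∣ q - 1) (y : ℤ_[3]) :
    ((ι q y : ℤ_[3]) : ℚ_[3]) = Fq (y : ℚ_[3]) ((q : ℚ_[3]) - 1) := by
  set s : ℚ_[3] := (q : ℚ_[3]) - 1 with hsdef
  have hs : ‖s‖ ≤ 1/3 := by
    obtain ⟨c, hc⟩ := hq
    have : s = ((3 * c : ℤ_[3]) : ℚ_[3]) := by
      rw [← hc]
      push_cast
      ring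
    rw [this]
    push_cast
    rw [norm_mul]
    calc ‖(3:ℚ_[3])‖ * ‖(c:ℚ_[3])‖ ≤ (1/3) * 1 := by
          apply mul_le_mul (le_of_eq norm_three) ?_ (norm_nonneg _) (by norm_num)
          rw [← PadicInt.norm_def]
          exact PadicInt.norm_le_one c
      _ = 1/3 := by norm_num
  have hcont1 : Continuous (fun t : ℤ_[3] => ((ι q t : ℤ_[3]) : ℚ_[3])) :=
    continuous_coe.comp (hι q hq).1
  have hcont2 : Continuous (fun t : ℤ_[3] => Fq (t : ℚ_[3]) s) := by
    unfold Fq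
    apply continuous_tsum (u := fun k => (1/3)^k)
    · intro k
      exact (continuous_Cq (k+1)).mul continuous_const
    · exact summable_geometric_of_lt_one (by norm_num) (by norm_num)
    · intro k t
      simpa using norm_term_le t hs 1 0 k
  have hagree : (fun t : ℤ_[3] => ((ι q t : ℤ_[3]) : ℚ_[3])) ∘ (Nat.cast : ℕ → ℤ_[3])
      = (fun t : ℤ_[3] => Fq (t : ℚ_[3]) s) ∘ (Nat.cast : ℕ → ℤ_[3]) := by
    funext n
    simp only [Function.comp_apply]
    rw [(hι q hq).2 n]
    have hc : (((n : ℤ_[3]) : ℚ_[3])) = (n : ℚ_[3]) := by push_cast; ring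
    rw [hc, Fq_nat]
    have h1s : (1 : ℚ_[3]) + s = (q : ℚ_[3]) := by rw [hsdef]; ring
    rw [h1s]
    calc ((∑ i ∈ Finset.range n, q ^ i : ℤ_[3]) : ℚ_[3])
        = ∑ i ∈ Finset.range n, ((q ^ i : ℤ_[3]) : ℚ_[3]) := map_sum (PadicInt.Coe.ringHom) _ _
      _ = ∑ i ∈ Finset.range n, (q : ℚ_[3]) ^ i := by
          apply Finset.sum_congr rfl
          intro i _
          push_cast
          ring
  have := DenseRange.equalizer PadicInt.denseRange_natCast hcont1 hcont2 hagree
  exact congrFun this y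

lemma dvd_iff_norm_le (x : ℤ_[3]) (n : ℕ) :
    (3 : ℤ_[3]) ^ n ∣ x ↔ ‖(x : ℚ_[3])‖ ≤ (3:ℝ) ^ (-(n:ℤ)) := by
  have h := PadicInt.norm_le_pow_iff_mem_span_pow x n
  rw [Ideal.mem_span_singleton] at h
  have h2 : (((3:ℕ) : ℤ_[3])) = (3 : ℤ_[3]) := by norm_num
  have h3 : (((3:ℕ) : ℝ)) = (3 : ℝ) := by norm_num
  rw [h2, h3] at h
  rw [← PadicInt.norm_def]
  exact h.symm

end ExistsUniqueQAux
end PartD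
section PartE
open Finset IsUltrametricDist ExistsUniqueQAux

namespace ExistsUniqueQAux

lemma norm_sub_le_max' (a b : ℚ_[3]) : ‖a - b‖ ≤ max ‖a‖ ‖b‖ := by
  rw [sub_eq_add_neg]
  simpa [norm_neg] using norm_add_le_max a (-b)

lemma zpow31 : (3:ℝ) ^ (-((1:ℕ):ℤ)) = 1/3 := by norm_num
lemma zpow32 : (3:ℝ) ^ (-((2:ℕ):ℤ)) = 1/9 := by
  rw [show (-((2:ℕ):ℤ)) = -2 by norm_num]
  rw [zpow_neg]
  norm_num

end ExistsUniqueQAux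

/-- For `z ∈ ℤ_3` with `1 ≤ v_3(z(z−1)) < ∞` (i.e. `z ≠ 0, 1` and `3 ∣ z(z−1)`),
there is a unique `q ∈ 1 + 3ℤ_3`, `q ≠ 1`, with `ι_q(z) = z`; moreover any such `q`
satisfies `q ≡ 7 (mod 9)` if `3 ∣ z` and `q ≡ 4 (mod 9)` if `3 ∣ z − 1`. -/
theorem exists_unique_q (ι : ℤ_[3] → ℤ_[3] → ℤ_[3])
    (hι : ∀ q : ℤ_[3], (3 : ℤ_[3]) ∣ q - 1 →
      Continuous (ι q) ∧ ∀ n : ℕ, ι q n = ∑ i ∈ Finset.range n, q ^ i)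
    (z : ℤ_[3]) (hz0 : z ≠ 0) (hz1 : z ≠ 1) (hzv : (3 : ℤ_[3]) ∣ z * (z - 1)) :
    (∃! q : ℤ_[3], ((3 : ℤ_[3]) ∣ q - 1 ∧ q ≠ 1) ∧ ι q z = z) ∧
    (∀ q : ℤ_[3], (3 : ℤ_[3]) ∣ q - 1 → q ≠ 1 → ι q z = z →
      (((3 : ℤ_[3]) ∣ z → (9 : ℤ_[3]) ∣ q - 7) ∧
       ((3 : ℤ_[3]) ∣ z - 1 → (9 : ℤ_[3]) ∣ q - 4))) := by
  classical
  have hp3 : Prime (3 : ℤ_[3]) := by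
    have := PadicInt.prime_p (p := 3)
    simpa using this
  have hz3 : (3:ℤ_[3]) ∣ z ∨ (3:ℤ_[3]) ∣ (z - 1) := (hp3.dvd_mul).mp hzv
  have hz0' : ((z : ℚ_[3])) ≠ 0 := by
    intro h
    exact hz0 (Subtype.coe_injective h)
  have hz1' : ((z : ℚ_[3])) - 1 ≠ 0 := by
    intro h
    apply hz1
    apply Subtype.coe_injective
    have : (z : ℚ_[3]) = 1 := by linear_combination h
    simpa using this
  have hA : (z:ℚ_[3]) * ((z:ℚ_[3]) - 1) ≠ 0 := mul_ne_zero hz0' hz1'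
  have hcastA : (((z * (z - 1) : ℤ_[3])) : ℚ_[3]) = (z:ℚ_[3]) * ((z:ℚ_[3]) - 1) := by
    push_cast
    ring
  have hAn : ‖(z:ℚ_[3]) * ((z:ℚ_[3]) - 1)‖ ≤ 1/3 := by
    have := (dvd_iff_norm_le (z * (z - 1)) 1).mp (by simpa [pow_one] using hzv)
    rw [hcastA, zpow31] at this
    exact this
  have hnot32 : ¬ (3:ℤ_[3]) ∣ (2 : ℤ_[3]) := by
    intro h
    have hlt : ‖(2:ℤ_[3])‖ < 1 := (PadicInt.norm_lt_one_iff_dvd _).mpr h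
    rw [PadicInt.norm_def, show ((2:ℤ_[3]):ℚ_[3]) = (2:ℚ_[3]) by norm_cast, norm_two] at hlt
    norm_num at hlt
  have hnot31 : ¬ (3:ℤ_[3]) ∣ (1 : ℤ_[3]) := by
    intro h
    have hlt : ‖(1:ℤ_[3])‖ < 1 := (PadicInt.norm_lt_one_iff_dvd _).mpr h
    simp at hlt
  have hu : ‖(z:ℚ_[3]) - 2‖ = 1 := by
    have hcz2 : ((z - 2 : ℤ_[3]) : ℚ_[3]) = (z:ℚ_[3]) - 2 := by norm_cast
    have hle : ‖(z:ℚ_[3]) - 2‖ ≤ 1 := by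
      rw [← hcz2, ← PadicInt.norm_def]
      exact PadicInt.norm_le_one _
    rcases lt_or_eq_of_le hle with hlt | heq
    · exfalso
      have hdvd2 : (3:ℤ_[3]) ∣ (z - 2) :=
        (PadicInt.norm_lt_one_iff_dvd _).mp (by rw [PadicInt.norm_def, hcz2]; exact hlt)
      rcases hz3 with h | h
      · have h21 : z - (z - 2) = 2 := by ring
        exact hnot32 (h21 ▸ dvd_sub h hdvd2)
      · have h21 : (z - 1) - (z - 2) = 1 := by ring
        exact hnot31 (h21 ▸ dvd_sub h hdvd2)
    · exact heq
  have hune : (z:ℚ_[3]) - 2 ≠ 0 := by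
    intro h
    rw [h] at hu
    simp at hu
  -- Banach fixed point setup
  let K : Set ℚ_[3] := Metric.closedBall 0 (1/3)
  have hmem : ∀ s : ℚ_[3], s ∈ K ↔ ‖s‖ ≤ 1/3 := fun s => by
    simp [K, Metric.mem_closedBall, dist_zero_right]
  haveI hKcomp : CompleteSpace K := Metric.isClosed_closedBall.completeSpace_coe
  haveI hKne : Nonempty K := ⟨⟨0, (hmem 0).mpr (by norm_num)⟩⟩
  let φ : K → K := fun t => ⟨Phi (z:ℚ_[3]) t.1,
    (hmem _).mpr (norm_Phi_le z ((hmem _).mp t.2) hA hu)⟩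
  have hlip : LipschitzWith (1/3 : NNReal) φ := by
    apply LipschitzWith.of_dist_le_mul
    intro a b
    have hest := norm_Phi_sub_le z ((hmem _).mp a.2) ((hmem _).mp b.2) hA hu
    have hco : (((1/3 : NNReal)) : ℝ) = 1/3 := by norm_num
    calc dist (φ a) (φ b) = ‖Phi (z:ℚ_[3]) a.1 - Phi (z:ℚ_[3]) b.1‖ := by
          rw [Subtype.dist_eq, dist_eq_norm]
      _ ≤ (1/3) * ‖a.1 - b.1‖ := hest
      _ = ((1/3 : NNReal) : ℝ) * dist a b := by
          rw [hco, Subtype.dist_eq, dist_eq_norm]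
  have hcontr : ContractingWith (1/3 : NNReal) φ :=
    ⟨by rw [← NNReal.coe_lt_coe]; norm_num, hlip⟩
  set sstar : ℚ_[3] := (ContractingWith.fixedPoint φ hcontr : K).1 with hssdef
  have hsn : ‖sstar‖ ≤ 1/3 := (hmem _).mp (ContractingWith.fixedPoint φ hcontr).2
  have hfix : Phi (z:ℚ_[3]) sstar = sstar :=
    congrArg Subtype.val (hcontr.fixedPoint_isFixedPt)
  have huniqS : ∀ s : ℚ_[3], ‖s‖ ≤ 1/3 → Phi (z:ℚ_[3]) s = s → s = sstar := by
    intro s h1 h2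
    have : (⟨s, (hmem s).mpr h1⟩ : K) = ContractingWith.fixedPoint φ hcontr :=
      hcontr.fixedPoint_unique (Subtype.ext h2)
    exact congrArg Subtype.val this
  have hrep : sstar + 3*((z:ℚ_[3])-2)⁻¹
      = -((z:ℚ_[3])-2)⁻¹ * ((6 / ((z:ℚ_[3])*((z:ℚ_[3])-1))) * Tq (z:ℚ_[3]) sstar) := by
    conv_lhs => rw [← hfix]
    rw [Phi]
    ring
  have h9 : ‖sstar + 3*((z:ℚ_[3])-2)⁻¹‖ ≤ 1/9 := by
    rw [hrep, norm_mul, norm_neg, norm_inv, hu, inv_one, one_mul]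
    exact norm_h_le z hsn hA
  have hs0 : sstar ≠ 0 := by
    intro h0
    rw [h0, zero_add] at h9
    rw [norm_mul, norm_inv, hu, inv_one, mul_one, norm_three] at h9
    norm_num at h9
  have hq_norm : ‖1 + sstar‖ ≤ 1 := by
    refine le_trans (norm_add_le_max 1 sstar) (max_le (le_of_eq norm_one) (by linarith))
  set q0 : ℤ_[3] := (⟨1 + sstar, hq_norm⟩ : ℤ_[3]) with hq0def
  have hq0coe : (q0 : ℚ_[3]) = 1 + sstar := rfl
  have hq0s : (q0:ℚ_[3]) - 1 = sstar := by rw [hq0coe]; ring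
  have hq0dvd : (3:ℤ_[3]) ∣ q0 - 1 := by
    have hcoe : ((q0 - 1 : ℤ_[3]) : ℚ_[3]) = sstar := by
      rw [PadicInt.coe_sub, PadicInt.coe_one, hq0coe]
      ring
    have : (3:ℤ_[3])^1 ∣ q0 - 1 := by
      rw [dvd_iff_norm_le, hcoe, zpow31]
      exact hsn
    simpa using this
  have hq0ne : q0 ≠ 1 := by
    intro h
    apply hs0
    have : (q0 : ℚ_[3]) = 1 := by rw [h]; rfl
    rw [hq0coe] at this
    linear_combination this
  have hGq0 : Gq (z:ℚ_[3]) sstar = 0 := (Phi_iff_Gq z hsn hA hu).mp hfix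
  have hfix0 : ι q0 z = z := by
    have h := iota_spec ι hι q0 hq0dvd z
    rw [hq0s, Fq_split z hsn, hGq0, mul_zero, add_zero] at h
    exact Subtype.coe_injective h
  have huniqQ : ∀ q : ℤ_[3], (3:ℤ_[3]) ∣ q - 1 → q ≠ 1 → ι q z = z → q = q0 := by
    intro q hdvd hne hfq
    have hscoe : ((q - 1 : ℤ_[3]) : ℚ_[3]) = (q:ℚ_[3]) - 1 := by
      rw [PadicInt.coe_sub, PadicInt.coe_one]
    have hsle : ‖(q:ℚ_[3]) - 1‖ ≤ 1/3 := by
      have := (dvd_iff_norm_le (q - 1) 1).mp (by simpa [pow_one] using hdvd)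
      rw [hscoe, zpow31] at this
      exact this
    have hsne : (q:ℚ_[3]) - 1 ≠ 0 := by
      intro h
      apply hne
      apply Subtype.coe_injective
      have : (q:ℚ_[3]) = 1 := by linear_combination h
      simpa using this
    have h := iota_spec ι hι q hdvd z
    rw [hfq, Fq_split z hsle] at h
    have hG : Gq (z:ℚ_[3]) ((q:ℚ_[3]) - 1) = 0 := by
      have hmul : ((q:ℚ_[3]) - 1) * Gq (z:ℚ_[3]) ((q:ℚ_[3]) - 1) = 0 := by
        linear_combination -h
      rcases mul_eq_zero.mp hmul with h' | h'
      · exact absurd h' hsne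
      · exact h'
    have hPhis : Phi (z:ℚ_[3]) ((q:ℚ_[3]) - 1) = (q:ℚ_[3]) - 1 :=
      (Phi_iff_Gq z hsle hA hu).mpr hG
    have hss : (q:ℚ_[3]) - 1 = sstar := huniqS _ hsle hPhis
    apply Subtype.coe_injective
    show (q : ℚ_[3]) = (q0 : ℚ_[3])
    rw [hq0coe]
    linear_combination hss
  refine ⟨⟨q0, ⟨⟨hq0dvd, hq0ne⟩, hfix0⟩, fun q hq => huniqQ q hq.1.1 hq.1.2 hq.2⟩, ?_⟩
  intro q hdvd hne hfq
  have hq_eq : q = q0 := huniqQ q hdvd hne hfq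
  rw [hq_eq]
  constructor
  · -- 3 ∣ z → 9 ∣ q - 7
    intro h3z
    have hznorm : ‖(z:ℚ_[3])‖ ≤ 1/3 := by
      have := (dvd_iff_norm_le z 1).mp (by simpa [pow_one] using h3z)
      rw [zpow31] at this
      exact this
    have hdecomp : ((q0 - 7 : ℤ_[3]) : ℚ_[3])
        = (sstar + 3*((z:ℚ_[3])-2)⁻¹) - 3*(((z:ℚ_[3])-2)⁻¹ + 2) := by
      rw [PadicInt.coe_sub, hq0coe, show ((7:ℤ_[3]):ℚ_[3]) = 7 by norm_cast]
      ring
    have hfac : ((z:ℚ_[3])-2)⁻¹ + 2 = ((z:ℚ_[3])-2)⁻¹ * (2*(z:ℚ_[3]) - 3) := by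
      field_simp
      ring
    have hpart : ‖3*(((z:ℚ_[3])-2)⁻¹ + 2)‖ ≤ 1/9 := by
      rw [hfac, norm_mul, norm_three, norm_mul, norm_inv, hu, inv_one, one_mul]
      have h2z3 : ‖2*(z:ℚ_[3]) - 3‖ ≤ 1/3 := by
        refine le_trans (norm_sub_le_max' _ _) (max_le ?_ (le_of_eq norm_three))
        rw [norm_mul, norm_two, one_mul]
        exact hznorm
      linarith
    have hnorm : ‖((q0 - 7 : ℤ_[3]) : ℚ_[3])‖ ≤ 1/9 := by
      rw [hdecomp]
      exact le_trans (norm_sub_le_max' _ _) (max_le h9 hpart)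
    have : (3:ℤ_[3])^2 ∣ q0 - 7 := by
      rw [dvd_iff_norm_le, zpow32]
      exact hnorm
    have h92 : (9:ℤ_[3]) = 3^2 := by norm_num
    rw [h92]
    exact this
  · -- 3 ∣ z - 1 → 9 ∣ q - 4
    intro h3z
    have hznorm : ‖(z:ℚ_[3]) - 1‖ ≤ 1/3 := by
      have := (dvd_iff_norm_le (z - 1) 1).mp (by simpa [pow_one] using h3z)
      rw [show ((z - 1 : ℤ_[3]):ℚ_[3]) = (z:ℚ_[3]) - 1 by norm_cast, zpow31] at this
      exact this
    have hdecomp : ((q0 - 4 : ℤ_[3]) : ℚ_[3])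
        = (sstar + 3*((z:ℚ_[3])-2)⁻¹) - 3*(((z:ℚ_[3])-2)⁻¹ + 1) := by
      rw [PadicInt.coe_sub, hq0coe, show ((4:ℤ_[3]):ℚ_[3]) = 4 by norm_cast]
      ring
    have hfac : ((z:ℚ_[3])-2)⁻¹ + 1 = ((z:ℚ_[3])-2)⁻¹ * ((z:ℚ_[3]) - 1) := by
      field_simp
      ring
    have hpart : ‖3*(((z:ℚ_[3])-2)⁻¹ + 1)‖ ≤ 1/9 := by
      rw [hfac, norm_mul, norm_three, norm_mul, norm_inv, hu, inv_one, one_mul]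
      linarith
    have hnorm : ‖((q0 - 4 : ℤ_[3]) : ℚ_[3])‖ ≤ 1/9 := by
      rw [hdecomp]
      exact le_trans (norm_sub_le_max' _ _) (max_le h9 hpart)
    have : (3:ℤ_[3])^2 ∣ q0 - 4 := by
      rw [dvd_iff_norm_le, zpow32]
      exact hnorm
    have h92 : (9:ℤ_[3]) = 3^2 := by norm_num
    rw [h92]
    exact this

end PartE
end

section
/- Let z ∈ ℤ_3 with v_0 = v_3(z(z−1)) satisfying 1 ≤ v_0 ≤ n − 2 for some n ≥ 3, and let q, q' ∈ 1 + 3ℤ_3 with q, q' ≢ 1 (mod 9). If ι_q(z) ≡ z (mod 3^n) and ι_{q'}(z) ≡ z (mod 3^n), then q ≡ q' (mod 3^{n−v_0}). -/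
open Finset

lemma p3 : Prime (3 : ℤ_[3]) := by
  have := PadicInt.prime_p (p := 3); simpa using this

lemma ncast_dvd (w : ℕ) : (3 : ℤ_[3]) ∣ (w : ℤ_[3]) ↔ 3 ∣ w := by
  have h1 := PadicInt.norm_int_lt_one_iff_dvd (p := 3) (w : ℤ)
  have h2 := PadicInt.norm_lt_one_iff_dvd (p := 3) ((w : ℤ) : ℤ_[3])
  push_cast at h1 h2
  rw [← h2, h1]
  exact_mod_cast Iff.rfl

lemma fact_e_le (k : ℕ) (hk : 4 ≤ k) : (Nat.factorial k).factorization 3 ≤ k - 3 := by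
  have h3 : Nat.Prime 3 := by norm_num
  have hne : Nat.factorial k ≠ 0 := Nat.factorial_ne_zero k
  by_contra h
  push_neg at h
  have hd : (3:ℕ) ^ (k-2) ∣ Nat.factorial k :=
    (Nat.Prime.pow_dvd_iff_le_factorization h3 hne).2 (by omega)
  rcases (by omega : k = 4 ∨ k = 5 ∨ 6 ≤ k) with rfl | rfl | h6
  · revert hd; decide
  · revert hd; decide
  · have h2 := Nat.Prime.emultiplicity_factorial_le_div_pred h3 k
    have h1 := le_emultiplicity_of_pow_dvd hd
    have := h1.trans h2
    rw [Nat.cast_le] at this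
    omega

lemma desc_dvd (m k : ℕ) (hk : 2 ≤ k) : m * (m-1) ∣ m.descFactorial k := by
  induction k with
  | zero => omega
  | succ k ih =>
    rcases (by omega : k = 1 ∨ 2 ≤ k) with rfl | h2
    · simp [Nat.descFactorial, Nat.mul_comm]
    · rw [Nat.descFactorial_succ]
      exact (ih h2).mul_left _

lemma choose_pow_dvd (m k v₀ : ℕ) (hm : 1 ≤ m) (hk : 4 ≤ k)
    (hmm : (3:ℤ_[3])^v₀ ∣ (m:ℤ_[3]) * ((m:ℤ_[3]) - 1)) :
    (3:ℤ_[3])^(v₀+2) ∣ (Nat.choose m k : ℤ_[3]) * 3^(k-1) := by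
  by_cases hcase : v₀ + 3 ≤ k
  · exact (pow_dvd_pow 3 (by omega : v₀+2 ≤ k-1)).trans (dvd_mul_left _ _)
  · have hk3 : k ≤ v₀ + 2 := by omega
    set e := (Nat.factorial k).factorization 3 with he_def
    have he : e ≤ k - 3 := fact_e_le k hk
    have hfac : (3:ℕ)^e * (Nat.factorial k / 3^e) = Nat.factorial k :=
      Nat.ordProj_mul_ordCompl_eq_self _ 3
    set w := Nat.factorial k / 3^e with hw_def
    have hw : ¬ (3:ℕ) ∣ w := Nat.not_dvd_ordCompl (by norm_num) (Nat.factorial_ne_zero k)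
    have hdvd : m*(m-1) ∣ Nat.descFactorial m k := desc_dvd m k (by omega)
    have hdc : Nat.descFactorial m k = Nat.factorial k * Nat.choose m k :=
      Nat.descFactorial_eq_factorial_mul_choose m k
    have hcast : ((m*(m-1) : ℕ) : ℤ_[3]) = (m:ℤ_[3]) * ((m:ℤ_[3]) - 1) := by
      push_cast [Nat.cast_sub hm]; ring
    have hz : (3:ℤ_[3])^v₀ ∣ ((Nat.descFactorial m k : ℕ) : ℤ_[3]) := by
      refine hmm.trans ?_
      rw [← hcast]
      exact_mod_cast Nat.cast_dvd_cast (α := ℤ_[3]) hdvd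
    rw [hdc, ← hfac] at hz
    push_cast at hz
    have hz2 : (3:ℤ_[3])^e * 3^(v₀-e) ∣ (3:ℤ_[3])^e * ((w:ℤ_[3]) * (Nat.choose m k : ℤ_[3])) := by
      rw [← pow_add]
      have : e + (v₀ - e) = v₀ := by omega
      rw [this]
      calc (3:ℤ_[3])^v₀ ∣ (3:ℤ_[3])^e * (w:ℤ_[3]) * (Nat.choose m k : ℤ_[3]) := hz
        _ = (3:ℤ_[3])^e * ((w:ℤ_[3]) * (Nat.choose m k : ℤ_[3])) := by ring
    have hz3 := (mul_dvd_mul_iff_left (pow_ne_zero e p3.ne_zero)).1 hz2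
    have hC : (3:ℤ_[3])^(v₀-e) ∣ (Nat.choose m k : ℤ_[3]) :=
      p3.pow_dvd_of_dvd_mul_left _ (by rw [ncast_dvd]; exact hw) hz3
    calc (3:ℤ_[3])^(v₀+2) ∣ (3:ℤ_[3])^((v₀-e) + (k-1)) := pow_dvd_pow 3 (by omega)
      _ = 3^(v₀-e) * 3^(k-1) := pow_add 3 _ _
      _ ∣ (Nat.choose m k : ℤ_[3]) * 3^(k-1) := mul_dvd_mul_right hC _
lemma key_id (m : ℕ) (hm : 1 ≤ m) (t : ℤ_[3]) :
    t * ((∑ i ∈ Finset.range m, (1+t)^i) - m)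
      = ∑ k ∈ Finset.Ico 2 (m+1), (Nat.choose m k : ℤ_[3]) * t^k := by
  have hg := geom_sum_mul (1+t) m
  have hb := add_pow t 1 m
  simp only [one_pow, mul_one] at hb
  rw [Finset.range_eq_Ico, Finset.sum_eq_sum_Ico_succ_bot (by omega : 0 < m+1),
    Finset.sum_eq_sum_Ico_succ_bot (by omega : 1 < m+1)] at hb
  simp only [pow_zero, pow_one, Nat.choose_zero_right, Nat.choose_one_right,
    Nat.cast_one, one_mul, mul_one] at hb
  have hsum : ∑ k ∈ Finset.Ico 2 (m+1), t^k * (Nat.choose m k : ℤ_[3])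
      = ∑ k ∈ Finset.Ico 2 (m+1), (Nat.choose m k : ℤ_[3]) * t^k :=
    Finset.sum_congr rfl (fun k _ => mul_comm _ _)
  rw [hsum] at hb
  linear_combination hg + hb

lemma heart (n v₀ : ℕ) (hn : v₀ + 2 ≤ n) (hv₁ : 1 ≤ v₀)
    (m : ℕ) (hm3 : 3 ≤ m)
    (hmm : (3:ℤ_[3])^v₀ ∣ (m:ℤ_[3]) * ((m:ℤ_[3]) - 1))
    (hmm' : ¬ (3:ℤ_[3])^(v₀+1) ∣ (m:ℤ_[3]) * ((m:ℤ_[3]) - 1))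
    (hm2 : ¬ (3:ℤ_[3]) ∣ ((m:ℤ_[3]) - 2))
    (u u' : ℤ_[3]) (hu : ¬ (3:ℤ_[3]) ∣ u) (hu' : ¬ (3:ℤ_[3]) ∣ u')
    (hA : (3:ℤ_[3])^n ∣ (∑ i ∈ Finset.range m, (1 + 3*u) ^ i) - m)
    (hB : (3:ℤ_[3])^n ∣ (∑ i ∈ Finset.range m, (1 + 3*u') ^ i) - m) :
    (3:ℤ_[3])^(n - v₀) ∣ 3*u - 3*u' := by
  classical
  set M : ℤ_[3] := (m : ℤ_[3]) with hM
  -- write M(M-1) = 3^v₀ * c with c not divisible by 3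
  obtain ⟨c, hc⟩ := id hmm
  have hcu : ¬ (3:ℤ_[3]) ∣ c := by
    intro ⟨d, hd⟩
    exact hmm' ⟨d, by rw [hc, hd]; ring⟩
  -- choose facts (natural numbers)
  have hchoose2 : (2 * Nat.choose m 2 : ℕ) = m * (m - 1) := by
    have := Nat.descFactorial_eq_factorial_mul_choose m 2
    simp [Nat.descFactorial] at this
    rw [Nat.mul_comm (m-1) m] at this
    omega
  have hchoose3 : (Nat.choose m 3 * 3 : ℕ) = Nat.choose m 2 * (m - 2) :=
    Nat.choose_succ_right_eq m 2
  have hC2 : (2 : ℤ_[3]) * (Nat.choose m 2 : ℤ_[3]) = 3^v₀ * c := by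
    rw [← hc, hM]
    have : ((2 * Nat.choose m 2 : ℕ) : ℤ_[3]) = ((m * (m-1) : ℕ) : ℤ_[3]) := by
      exact_mod_cast congrArg (Nat.cast : ℕ → ℤ_[3]) hchoose2
    push_cast [Nat.cast_sub (by omega : 1 ≤ m)] at this
    linear_combination this
  have hC3 : (Nat.choose m 3 : ℤ_[3]) * 3 = (Nat.choose m 2 : ℤ_[3]) * (M - 2) := by
    have : ((Nat.choose m 3 * 3 : ℕ) : ℤ_[3]) = ((Nat.choose m 2 * (m - 2) : ℕ) : ℤ_[3]) := by
      exact_mod_cast congrArg (Nat.cast : ℕ → ℤ_[3]) hchoose3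
    push_cast [Nat.cast_sub (by omega : 2 ≤ m)] at this
    exact this
  -- from the fixed-point condition to divisibility of the binomial expansion
  have hPa : ∀ w : ℤ_[3], (3:ℤ_[3])^n ∣ (∑ i ∈ Finset.range m, (1 + 3*w) ^ i) - m →
      (3:ℤ_[3])^(n+1) ∣ ∑ k ∈ Finset.Ico 2 (m+1), (Nat.choose m k : ℤ_[3]) * (3*w)^k := by
    intro w hw
    rw [← key_id m (by omega) (3*w)]
    have h1 : (3:ℤ_[3]) * 3^n ∣ 3 * (w * ((∑ i ∈ Finset.range m, (1 + 3*w) ^ i) - m)) :=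
      mul_dvd_mul_left 3 (hw.mul_left w)
    have h2 : (3:ℤ_[3])^(n+1) = 3 * 3^n := by ring
    have h3 : (3*w) * ((∑ i ∈ Finset.range m, (1 + 3*w) ^ i) - (m:ℤ_[3]))
        = 3 * (w * ((∑ i ∈ Finset.range m, (1 + 3*w) ^ i) - m)) := by ring
    rw [h2, h3]
    exact h1
  have hsplit : ∀ f : ℕ → ℤ_[3], (∑ k ∈ Finset.Ico 2 (m+1), f k)
      = f 2 + f 3 + ∑ k ∈ Finset.Ico 4 (m+1), f k := by
    intro f
    rw [Finset.sum_eq_sum_Ico_succ_bot (by omega : 2 < m+1),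
        Finset.sum_eq_sum_Ico_succ_bot (by omega : 3 < m+1)]
    ring
  -- key step 1 : 3 ∣ 1 + (M-2) w for both w = u and w = u'
  have key1 : ∀ w : ℤ_[3], ¬ (3:ℤ_[3]) ∣ w →
      (3:ℤ_[3])^(n+1) ∣ ∑ k ∈ Finset.Ico 2 (m+1), (Nat.choose m k : ℤ_[3]) * (3*w)^k →
      (3:ℤ_[3]) ∣ 1 + (M - 2)*w := by
    intro w hwu hP
    have hR : (3:ℤ_[3])^(v₀+3) ∣ ∑ k ∈ Finset.Ico 4 (m+1), (Nat.choose m k : ℤ_[3]) * (3*w)^k := by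
      refine Finset.dvd_sum ?_
      intro k hk
      rw [Finset.mem_Ico] at hk
      have h1 := choose_pow_dvd m k v₀ (by omega) hk.1 hmm
      have h3k : (3:ℤ_[3])^k = 3^(k-1) * 3 := by
        rw [← pow_succ]
        congr 1
        omega
      have h2 : (Nat.choose m k : ℤ_[3]) * (3*w)^k
          = ((Nat.choose m k : ℤ_[3]) * 3^(k-1)) * 3 * w^k := by
        rw [mul_pow, h3k]; ring
      rw [h2]
      have h4 : (3:ℤ_[3])^(v₀+3) = (3:ℤ_[3])^(v₀+2) * 3 := by ring
      rw [h4]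
      exact ((mul_dvd_mul_right h1 3).mul_right _)
    have hPv : (3:ℤ_[3])^(v₀+3) ∣ ∑ k ∈ Finset.Ico 2 (m+1), (Nat.choose m k : ℤ_[3]) * (3*w)^k :=
      (pow_dvd_pow 3 (by omega : v₀+3 ≤ n+1)).trans hP
    rw [hsplit] at hPv
    have h6 : (3:ℤ_[3])^(v₀+3) ∣ (Nat.choose m 2 : ℤ_[3]) * (3*w)^2
        + (Nat.choose m 3 : ℤ_[3]) * (3*w)^3 := by
      have h0 := dvd_sub hPv hR
      rwa [add_sub_cancel_right] at h0
    have hE : (2:ℤ_[3])*((Nat.choose m 2 : ℤ_[3]) * (3*w)^2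
        + (Nat.choose m 3 : ℤ_[3]) * (3*w)^3)
        = 3^(v₀+2) * (w^2 * c * (1 + (M-2)*w)) := by
      have h9 : (3:ℤ_[3])^(v₀+2) = 3^v₀ * 9 := by ring
      rw [h9]
      linear_combination (9*w^2*(1+(M-2)*w)) * hC2 + (18*w^3) * hC3
    have h7 : (3:ℤ_[3])^(v₀+2) * 3 ∣ 3^(v₀+2) * (w^2 * c * (1 + (M-2)*w)) := by
      rw [← hE]
      have h4 : (3:ℤ_[3])^(v₀+2) * 3 = 3^(v₀+3) := by ring
      rw [h4]
      exact h6.mul_left 2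
    have h8 : (3:ℤ_[3]) ∣ w^2 * c * (1 + (M-2)*w) :=
      (mul_dvd_mul_iff_left (pow_ne_zero _ p3.ne_zero)).1 h7
    rcases p3.dvd_mul.1 h8 with h | h
    · rcases p3.dvd_mul.1 h with h' | h'
      · exact absurd (p3.dvd_of_dvd_pow h') hwu
      · exact absurd h' hcu
    · exact h
  have hu1 := key1 u hu (hPa u hA)
  have hu1' := key1 u' hu' (hPa u' hB)
  have hdiff : (3:ℤ_[3]) ∣ u - u' := by
    have hd : (3:ℤ_[3]) ∣ (M-2)*(u - u') := by
      have h0 := dvd_sub hu1 hu1'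
      have : (1 + (M-2)*u) - (1 + (M-2)*u') = (M-2)*(u-u') := by ring
      rwa [this] at h0
    rcases p3.dvd_mul.1 hd with h | h
    · exact absurd h hm2
    · exact h
  have h32 : ¬ (3:ℤ_[3]) ∣ (2:ℤ_[3]) := by
    rw [show (2:ℤ_[3]) = ((2:ℕ):ℤ_[3]) by norm_cast, ncast_dvd]
    decide
  have hsum : ¬ (3:ℤ_[3]) ∣ u + u' := by
    intro h
    have h2 : (3:ℤ_[3]) ∣ 2*u := by
      have h0 := dvd_add h hdiff
      have : (u + u') + (u - u') = 2*u := by ring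
      rwa [this] at h0
    rcases p3.dvd_mul.1 h2 with h' | h'
    · exact h32 h'
    · exact hu h'
  obtain ⟨t, ht⟩ := hdiff
  -- difference of the two conditions
  have hdvdT : (3:ℤ_[3])^(n+1) ∣
      (∑ k ∈ Finset.Ico 2 (m+1), (Nat.choose m k : ℤ_[3])
        * (∑ i ∈ Finset.range k, (3*u)^i * (3*u')^(k-1-i))) * (3*u - 3*u') := by
    have h0 := dvd_sub (hPa u hA) (hPa u' hB)
    rw [← Finset.sum_sub_distrib] at h0
    have heq : ∑ k ∈ Finset.Ico 2 (m+1),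
        ((Nat.choose m k : ℤ_[3]) * (3*u)^k - (Nat.choose m k : ℤ_[3]) * (3*u')^k)
        = (∑ k ∈ Finset.Ico 2 (m+1), (Nat.choose m k : ℤ_[3])
            * (∑ i ∈ Finset.range k, (3*u)^i * (3*u')^(k-1-i))) * (3*u - 3*u') := by
      rw [Finset.sum_mul]
      refine Finset.sum_congr rfl fun k _ => ?_
      have hg := geom_sum₂_mul (3*u) (3*u') k
      linear_combination (-(Nat.choose m k : ℤ_[3])) * hg
    rwa [heq] at h0
  -- the tail of T
  have hRT : (3:ℤ_[3])^(v₀+2) ∣ ∑ k ∈ Finset.Ico 4 (m+1), (Nat.choose m k : ℤ_[3])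
      * (∑ i ∈ Finset.range k, (3*u)^i * (3*u')^(k-1-i)) := by
    refine Finset.dvd_sum ?_
    intro k hk
    rw [Finset.mem_Ico] at hk
    have hSk : (∑ i ∈ Finset.range k, (3*u)^i * (3*u')^(k-1-i))
        = 3^(k-1) * (∑ i ∈ Finset.range k, u^i * u'^(k-1-i)) := by
      rw [Finset.mul_sum]
      refine Finset.sum_congr rfl fun i hi => ?_
      rw [Finset.mem_range] at hi
      have hik : (3:ℤ_[3])^i * 3^(k-1-i) = 3^(k-1) := by
        rw [← pow_add]
        congr 1
        omega
      rw [mul_pow, mul_pow, ← hik]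
      ring
    rw [hSk, ← mul_assoc]
    exact (choose_pow_dvd m k v₀ (by omega) hk.1 hmm).mul_right _
  obtain ⟨r, hr⟩ := hRT
  have h6C3 : (6:ℤ_[3]) * (Nat.choose m 3 : ℤ_[3]) = 3^v₀ * (c * (M-2)) := by
    linear_combination 2*hC3 + (M-2)*hC2
  have hS2 : (∑ i ∈ Finset.range 2, (3*u)^i * (3*u')^(2-1-i)) = 3*u + 3*u' := by
    norm_num [Finset.sum_range_succ]
    ring
  have hS3 : (∑ i ∈ Finset.range 3, (3*u)^i * (3*u')^(3-1-i))
      = 27*(u'^2 + t*(u+2*u')) := by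
    have e1 : (∑ i ∈ Finset.range 3, (3*u)^i * (3*u')^(3-1-i))
        = 9*u'^2 + 9*(u*u') + 9*u^2 := by
      norm_num [Finset.sum_range_succ]
      ring
    rw [e1]
    linear_combination (9*(u+2*u')) * ht
  have hT : (∑ k ∈ Finset.Ico 2 (m+1), (Nat.choose m k : ℤ_[3])
        * (∑ i ∈ Finset.range k, (3*u)^i * (3*u')^(k-1-i)))
      = (Nat.choose m 2 : ℤ_[3]) * (3*u + 3*u')
        + (Nat.choose m 3 : ℤ_[3]) * (27*(u'^2 + t*(u+2*u')))
        + 3^(v₀+2) * r := by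
    have h0 := hsplit (fun k => (Nat.choose m k : ℤ_[3])
        * (∑ i ∈ Finset.range k, (3*u)^i * (3*u')^(k-1-i)))
    beta_reduce at h0
    rw [hS2, hS3, hr] at h0
    exact h0
  have h6T : (6:ℤ_[3]) * (∑ k ∈ Finset.Ico 2 (m+1), (Nat.choose m k : ℤ_[3])
        * (∑ i ∈ Finset.range k, (3*u)^i * (3*u')^(k-1-i)))
      = 3^(v₀+2) * (c*(u+u') + 3*(c*(M-2)*(u'^2 + t*(u+2*u'))) + 6*r) := by
    linear_combination 6*hT + (9*(u+u'))*hC2 + (27*(u'^2 + t*(u+2*u')))*h6C3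
  have hYnd : ¬ (3:ℤ_[3]) ∣ (c*(u+u') + 3*(c*(M-2)*(u'^2 + t*(u+2*u'))) + 6*r) := by
    intro h
    have h1 : (3:ℤ_[3]) ∣ c*(u+u') := by
      have h0 := dvd_sub h (Dvd.intro _ rfl :
        (3:ℤ_[3]) ∣ 3*((c*(M-2)*(u'^2 + t*(u+2*u'))) + 2*r))
      have e : (c*(u+u') + 3*(c*(M-2)*(u'^2 + t*(u+2*u'))) + 6*r)
          - 3*((c*(M-2)*(u'^2 + t*(u+2*u'))) + 2*r) = c*(u+u') := by ring
      rwa [e] at h0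
    rcases p3.dvd_mul.1 h1 with h' | h'
    · exact hcu h'
    · exact hsum h'
  have hfin : (3:ℤ_[3])^(v₀+2) * 3^(n-v₀) ∣
      3^(v₀+2) * ((c*(u+u') + 3*(c*(M-2)*(u'^2 + t*(u+2*u'))) + 6*r) * (3*u - 3*u')) := by
    have h0 : (3:ℤ_[3])^(n+2) ∣ 6*((∑ k ∈ Finset.Ico 2 (m+1), (Nat.choose m k : ℤ_[3])
        * (∑ i ∈ Finset.range k, (3*u)^i * (3*u')^(k-1-i))) * (3*u - 3*u')) := by
      have h1 : (3:ℤ_[3])^(n+2) = 3 * 3^(n+1) := by ring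
      have h2 := (mul_dvd_mul_left (3:ℤ_[3]) hdvdT).mul_left 2
      rw [← h1] at h2
      have e : (2:ℤ_[3]) * (3 * ((∑ k ∈ Finset.Ico 2 (m+1), (Nat.choose m k : ℤ_[3])
        * (∑ i ∈ Finset.range k, (3*u)^i * (3*u')^(k-1-i))) * (3*u - 3*u')))
          = 6*((∑ k ∈ Finset.Ico 2 (m+1), (Nat.choose m k : ℤ_[3])
        * (∑ i ∈ Finset.range k, (3*u)^i * (3*u')^(k-1-i))) * (3*u - 3*u')) := by ring
      rwa [e] at h2
    have e2 : 6*((∑ k ∈ Finset.Ico 2 (m+1), (Nat.choose m k : ℤ_[3])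
        * (∑ i ∈ Finset.range k, (3*u)^i * (3*u')^(k-1-i))) * (3*u - 3*u'))
        = 3^(v₀+2) * ((c*(u+u') + 3*(c*(M-2)*(u'^2 + t*(u+2*u'))) + 6*r) * (3*u - 3*u')) := by
      linear_combination (3*u - 3*u') * h6T
    rw [e2] at h0
    have e3 : (3:ℤ_[3])^(v₀+2) * 3^(n-v₀) = 3^(n+2) := by
      rw [← pow_add]
      congr 1
      omega
    rwa [e3]
  have h5 := (mul_dvd_mul_iff_left (pow_ne_zero _ p3.ne_zero)).1 hfin
  exact p3.pow_dvd_of_dvd_mul_left _ hYnd h5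

lemma dvd_iff_norm (x : ℤ_[3]) (j : ℕ) :
    (3:ℤ_[3])^j ∣ x ↔ ‖x‖ ≤ (3:ℝ)^(-(j:ℤ)) := by
  have h := PadicInt.norm_le_pow_iff_mem_span_pow (p := 3) x j
  rw [Ideal.mem_span_singleton] at h
  norm_num at h
  rw [zpow_neg, zpow_natCast, ← h]

lemma val_dvd (x : ℤ_[3]) (hx : x ≠ 0) (j : ℕ) :
    (3:ℤ_[3])^j ∣ x ↔ (j:ℤ) ≤ x.valuation := by
  have h := PadicInt.norm_le_pow_iff_le_valuation (p := 3) x hx j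
  norm_num at h
  rw [dvd_iff_norm, zpow_neg, zpow_natCast, h]
  exact Nat.cast_le.symm

lemma three_not_dvd_two : ¬ (3:ℤ_[3]) ∣ (2:ℤ_[3]) := by
  rw [show (2:ℤ_[3]) = ((2:ℕ):ℤ_[3]) by norm_cast, ncast_dvd]
  decide

/-- Uniqueness part of "Existence of q": if `1 ≤ v₀ = v_3(z(z−1)) ≤ n − 2`, `n ≥ 3`,
and `q, q' ∈ 1 + 3ℤ_3` with `q, q' ≢ 1 (mod 9)` both satisfy `ι(z) ≡ z (mod 3^n)`,
then `q ≡ q' (mod 3^{n−v₀})`. -/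
theorem q_unique_mod (ι : ℤ_[3] → ℤ_[3] → ℤ_[3])
    (hι : ∀ q : ℤ_[3], (3 : ℤ_[3]) ∣ q - 1 →
      Continuous (ι q) ∧ ∀ n : ℕ, ι q n = ∑ i ∈ Finset.range n, q ^ i)
    (n : ℕ) (hn : 3 ≤ n) (z : ℤ_[3]) (hzne : z * (z - 1) ≠ 0)
    (v₀ : ℕ) (hv₀ : (z * (z - 1)).valuation = (v₀ : ℤ))
    (hv₁ : 1 ≤ v₀) (hv₂ : v₀ ≤ n - 2)
    (q q' : ℤ_[3])
    (hq1 : (3 : ℤ_[3]) ∣ q - 1) (hq9 : ¬ (9 : ℤ_[3]) ∣ q - 1)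
    (hq'1 : (3 : ℤ_[3]) ∣ q' - 1) (hq'9 : ¬ (9 : ℤ_[3]) ∣ q' - 1)
    (hfq : (3 : ℤ_[3]) ^ n ∣ ι q z - z) (hfq' : (3 : ℤ_[3]) ^ n ∣ ι q' z - z) :
    (3 : ℤ_[3]) ^ (n - v₀) ∣ q - q' := by
  have hz1 : (3:ℤ_[3])^v₀ ∣ z*(z-1) := (val_dvd _ hzne v₀).2 (le_of_eq hv₀.symm)
  have hz2 : ¬ (3:ℤ_[3])^(v₀+1) ∣ z*(z-1) := by
    intro h
    have h1 := (val_dvd _ hzne (v₀+1)).1 h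
    rw [hv₀] at h1
    have : ((v₀+1:ℕ):ℤ) ≤ (v₀:ℤ) := h1
    push_cast at this
    omega
  have hz3 : ¬ (3:ℤ_[3]) ∣ (z - 2) := by
    have h3x : (3:ℤ_[3]) ∣ z*(z-1) := (dvd_pow_self 3 (by omega : v₀ ≠ 0)).trans hz1
    rcases p3.dvd_mul.1 h3x with h | h
    · intro h2
      have h4 := dvd_sub h h2
      rw [show z - (z-2) = 2 by ring] at h4
      exact three_not_dvd_two h4
    · intro h2
      have h4 := dvd_sub h h2
      rw [show (z-1) - (z-2) = 1 by ring] at h4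
      exact p3.not_dvd_one h4
  obtain ⟨u, hqu⟩ := hq1
  have hu : ¬ (3:ℤ_[3]) ∣ u := by
    rintro ⟨d, hd⟩
    exact hq9 ⟨d, by rw [hqu, hd]; ring⟩
  obtain ⟨u', hq'u⟩ := hq'1
  have hu' : ¬ (3:ℤ_[3]) ∣ u' := by
    rintro ⟨d, hd⟩
    exact hq'9 ⟨d, by rw [hq'u, hd]; ring⟩
  obtain ⟨hcont, hnat⟩ := hι q ⟨u, hqu⟩
  obtain ⟨hcont', hnat'⟩ := hι q' ⟨u', hq'u⟩
  set ε : ℝ := (3:ℝ)^(-(n:ℤ)) with hεdef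
  have hε : 0 < ε := by positivity
  set δ : ℝ := (3:ℝ)^(-((v₀+1 : ℕ):ℤ)) with hδdef
  have hδ : 0 < δ := by positivity
  have hUopen : IsOpen (((fun x => ι q x - x) ⁻¹' Metric.ball (ι q z - z) ε) ∩
      ((fun x => ι q' x - x) ⁻¹' Metric.ball (ι q' z - z) ε) ∩ Metric.ball z δ) := by
    refine IsOpen.inter (IsOpen.inter ?_ ?_) Metric.isOpen_ball
    · exact (hcont.sub continuous_id).isOpen_preimage _ Metric.isOpen_ball
    · exact (hcont'.sub continuous_id).isOpen_preimage _ Metric.isOpen_ball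
  have hzU : z ∈ (((fun x => ι q x - x) ⁻¹' Metric.ball (ι q z - z) ε) ∩
      ((fun x => ι q' x - x) ⁻¹' Metric.ball (ι q' z - z) ε) ∩ Metric.ball z δ) :=
    ⟨⟨Metric.mem_ball_self hε, Metric.mem_ball_self hε⟩, Metric.mem_ball_self hδ⟩
  obtain ⟨m, hmU⟩ := PadicInt.denseRange_natCast.exists_mem_open hUopen ⟨z, hzU⟩
  obtain ⟨⟨hm1, hm2'⟩, hm3'⟩ := hmU
  have hmz : (3:ℤ_[3])^(v₀+1) ∣ ((m:ℤ_[3]) - z) := by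
    rw [dvd_iff_norm]
    have h0 := Metric.mem_ball.1 hm3'
    rw [dist_eq_norm] at h0
    exact le_of_lt (by exact_mod_cast h0)
  have key : ∀ w : ℤ_[3], (3:ℤ_[3])^n ∣ ι w z - z →
      (fun x => ι w x - x) ((m:ℕ) : ℤ_[3]) ∈ Metric.ball (ι w z - z) ε →
      (3:ℤ_[3])^n ∣ ι w ((m:ℕ) : ℤ_[3]) - ((m:ℕ) : ℤ_[3]) := by
    intro w hw hball
    have h1 : ‖(ι w ((m:ℕ) : ℤ_[3]) - ((m:ℕ) : ℤ_[3])) - (ι w z - z)‖ < ε := by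
      have := Metric.mem_ball.1 hball
      rwa [dist_eq_norm] at this
    have h2 : ‖ι w z - z‖ ≤ ε := (dvd_iff_norm _ n).1 hw
    have h3 : ‖ι w ((m:ℕ) : ℤ_[3]) - ((m:ℕ) : ℤ_[3])‖ ≤ ε := by
      have h4 := PadicInt.nonarchimedean ((ι w ((m:ℕ) : ℤ_[3]) - ((m:ℕ) : ℤ_[3])) - (ι w z - z)) (ι w z - z)
      rw [sub_add_cancel] at h4
      exact h4.trans (max_le (le_of_lt h1) h2)
    exact (dvd_iff_norm _ n).2 h3
  have hfm : (3:ℤ_[3])^n ∣ (∑ i ∈ Finset.range m, q^i) - m := by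
    have := key q hfq hm1
    rwa [hnat m] at this
  have hfm' : (3:ℤ_[3])^n ∣ (∑ i ∈ Finset.range m, q'^i) - m := by
    have := key q' hfq' hm2'
    rwa [hnat' m] at this
  have hmm : (3:ℤ_[3])^v₀ ∣ (m:ℤ_[3])*((m:ℤ_[3])-1) := by
    rw [show (m:ℤ_[3])*((m:ℤ_[3])-1) = z*(z-1) + ((m:ℤ_[3])-z)*((m:ℤ_[3])+z-1) by ring]
    exact dvd_add hz1 (((pow_dvd_pow 3 (Nat.le_succ v₀)).trans hmz).mul_right _)
  have hmm' : ¬ (3:ℤ_[3])^(v₀+1) ∣ (m:ℤ_[3])*((m:ℤ_[3])-1) := by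
    intro h
    refine hz2 ?_
    rw [show z*(z-1) = (m:ℤ_[3])*((m:ℤ_[3])-1) - ((m:ℤ_[3])-z)*((m:ℤ_[3])+z-1) by ring]
    exact dvd_sub h (hmz.mul_right _)
  have hm2d : ¬ (3:ℤ_[3]) ∣ ((m:ℤ_[3]) - 2) := by
    intro h
    refine hz3 ?_
    rw [show z-2 = ((m:ℤ_[3])-2) - ((m:ℤ_[3])-z) by ring]
    exact dvd_sub h ((dvd_pow_self 3 (Nat.succ_ne_zero v₀)).trans hmz)
  have hm3 : 3 ≤ m := by
    by_contra h
    push_neg at h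
    interval_cases m
    · exact hmm' (by norm_num)
    · exact hmm' (by norm_num)
    · have h2 : (3:ℤ_[3]) ∣ (2:ℤ_[3]) := by
        refine (dvd_pow_self 3 (by omega : v₀ ≠ 0)).trans ?_
        have := hmm
        norm_num at this
        exact this
      exact three_not_dvd_two h2
  have hq_eq : q = 1 + 3*u := by rw [← hqu]; ring
  have hq'_eq : q' = 1 + 3*u' := by rw [← hq'u]; ring
  have hA : (3:ℤ_[3])^n ∣ (∑ i ∈ Finset.range m, (1+3*u)^i) - m := by
    rw [← hq_eq]; exact hfm
  have hB : (3:ℤ_[3])^n ∣ (∑ i ∈ Finset.range m, (1+3*u')^i) - m := by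
    rw [← hq'_eq]; exact hfm'
  have hfinal := heart n v₀ (by omega) hv₁ m hm3 hmm hmm' hm2d u u' hu hu' hA hB
  rw [show (3:ℤ_[3])*u - 3*u' = q - q' by rw [hq_eq, hq'_eq]; ring] at hfinal
  exact hfinal
end
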